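/- Let 0 < α < 1, 0 < α̃ < 1, η ≥ 0, ζ > 0 and μ(ξ) = |ξ|^{(2α̃−1)/2}. Suppose v : [0,1] → ℂ is continuous, continuously differentiable on (0,1], the map x ↦ x^α v'(x) extends to a continuously differentiable function on [0,1], and define v_t := −i (x^α v')'. Assume the boundary conditions v'(1) = 0 and (x^α v')(0) = i ζ ∫_ℝ μ(ξ) φ(ξ) dξ, where φ : ℝ → ℂ is measurable with φ, ξφ ∈ L²(ℝ) and μφ ∈ L¹(ℝ), and let φ_t(ξ) := v(0) μ(ξ) − (ξ²+η) φ(ξ) (assumed to satisfy φ_t ∈ L²(ℝ)). Then Re ∫₀¹ v_t(x) \overline{v(x)} dx + ζ Re ∫_ℝ φ_t(ξ) \overline{φ(ξ)} dξ = −ζ ∫_ℝ (ξ²+η) |φ(ξ)|² dξ. -/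

import Mathlib

open MeasureTheory Set Complex
open Filter Topology
open scoped ENNReal

/-- Energy dissipation identity for the augmented system of the degenerate
Schrödinger equation with fractional boundary damping at the degenerate point `x = 0`:
with `v_t := -i (xᵅ v')'` (where `g` is the extension of `x ↦ xᵅ v'(x)` to `[0,1]` with
derivative `g'`), `μ(ξ) = |ξ|^{(2α̃-1)/2}` and `φ_t(ξ) := v(0) μ(ξ) - (ξ²+η) φ(ξ)`,
`Re ∫₀¹ v_t v̄ dx + ζ Re ∫_ℝ φ_t φ̄ dξ = -ζ ∫_ℝ (ξ²+η) |φ(ξ)|² dξ`. -/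
theorem stmt4 (α αt η ζ : ℝ) (hα0 : 0 < α) (hα1 : α < 1)
    (hαt0 : 0 < αt) (hαt1 : αt < 1) (hη : 0 ≤ η) (hζ : 0 < ζ)
    (v v' g g' : ℝ → ℂ) (φ : ℝ → ℂ)
    (hv : ContinuousOn v (Icc (0:ℝ) 1))
    (hv' : ∀ x ∈ Ioc (0:ℝ) 1, HasDerivWithinAt v (v' x) (Ioc (0:ℝ) 1) x)
    (hv'c : ContinuousOn v' (Ioc (0:ℝ) 1))
    (hg : ∀ x ∈ Ioc (0:ℝ) 1, g x = ((x ^ α : ℝ) : ℂ) * v' x)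
    (hg' : ∀ x ∈ Icc (0:ℝ) 1, HasDerivWithinAt g (g' x) (Icc (0:ℝ) 1) x)
    (hg'c : ContinuousOn g' (Icc (0:ℝ) 1))
    (hbc1 : v' 1 = 0)
    (hφmeas : Measurable φ)
    (hφ2 : MemLp φ 2 volume)
    (hξφ2 : MemLp (fun ξ : ℝ => (ξ : ℂ) * φ ξ) 2 volume)
    (hμφ1 : Integrable (fun ξ : ℝ => ((|ξ| ^ ((2 * αt - 1) / 2) : ℝ) : ℂ) * φ ξ))
    (hbc0 : g 0 = Complex.I * (ζ : ℂ) *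
      ∫ ξ : ℝ, ((|ξ| ^ ((2 * αt - 1) / 2) : ℝ) : ℂ) * φ ξ)
    (hφt2 : MemLp
      (fun ξ : ℝ => v 0 * ((|ξ| ^ ((2 * αt - 1) / 2) : ℝ) : ℂ)
        - ((ξ ^ 2 + η : ℝ) : ℂ) * φ ξ) 2 volume) :
    (∫ x in Ioc (0:ℝ) 1, (-Complex.I * g' x) * (starRingEnd ℂ) (v x)).re
      + ζ * (∫ ξ : ℝ, (v 0 * ((|ξ| ^ ((2 * αt - 1) / 2) : ℝ) : ℂ)
          - ((ξ ^ 2 + η : ℝ) : ℂ) * φ ξ) * (starRingEnd ℂ) (φ ξ)).re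
      = -ζ * ∫ ξ : ℝ, (ξ ^ 2 + η) * ‖φ ξ‖ ^ 2 := by
  have hgc : ContinuousOn g (Icc (0:ℝ) 1) := fun x hx => (hg' x hx).continuousWithinAt
  set f : ℝ → ℂ := fun x => g' x * (starRingEnd ℂ) (v x) with hfdef
  have hfc : ContinuousOn f (Icc (0:ℝ) 1) := by
    simp only [hfdef, starRingEnd_apply]
    exact hg'c.mul hv.star
  have hfint : IntervalIntegrable f volume 0 1 :=
    hfc.intervalIntegrable_of_Icc zero_le_one
  have hg1 : g 1 = 0 := by
    rw [hg 1 ⟨one_pos, le_refl 1⟩, hbc1, mul_zero]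
  -- integration by parts on [ε, 1]
  have key : ∀ ε ∈ Ioo (0:ℝ) 1,
      (∫ x in ε..1, g x * (starRingEnd ℂ) (v' x))
        = - (g ε * (starRingEnd ℂ) (v ε)) - ∫ x in ε..1, f x := by
    intro ε hε
    have hε1 : ε ≤ 1 := hε.2.le
    have hsub : Icc ε 1 ⊆ Icc (0:ℝ) 1 := Icc_subset_Icc hε.1.le le_rfl
    have hsub' : Icc ε 1 ⊆ Ioc (0:ℝ) 1 := fun x hx => ⟨lt_of_lt_of_le hε.1 hx.1, hx.2⟩
    have hder : ∀ x ∈ Ioo ε 1,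
        HasDerivWithinAt (fun y => g y * (starRingEnd ℂ) (v y))
          (f x + g x * (starRingEnd ℂ) (v' x)) (Ioi x) x := by
      intro x hx
      have hx0 : 0 < x := lt_trans hε.1 hx.1
      have hgd : HasDerivAt g (g' x) x :=
        (hg' x ⟨hx0.le, hx.2.le⟩).hasDerivAt (Icc_mem_nhds hx0 hx.2)
      have hvd : HasDerivAt v (v' x) x :=
        (hv' x ⟨hx0, hx.2.le⟩).hasDerivAt (Ioc_mem_nhds hx0 hx.2)
      exact (hgd.mul hvd.star).hasDerivWithinAt
    have hcont : ContinuousOn (fun y => g y * (starRingEnd ℂ) (v y)) (Icc ε 1) := by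
      simp only [starRingEnd_apply]
      exact (hgc.mono hsub).mul ((hv.mono hsub).star)
    have hint1 : IntervalIntegrable f volume ε 1 :=
      (hfc.mono hsub).intervalIntegrable_of_Icc hε1
    have hint2 : IntervalIntegrable (fun x => g x * (starRingEnd ℂ) (v' x)) volume ε 1 := by
      apply ContinuousOn.intervalIntegrable_of_Icc hε1
      simp only [starRingEnd_apply]
      exact (hgc.mono hsub).mul ((hv'c.mono hsub').star)
    have hftc := intervalIntegral.integral_eq_sub_of_hasDeriv_right_of_le hε1 hcont hder
      (hint1.add hint2)
    rw [intervalIntegral.integral_add hint1 hint2, hg1, zero_mul] at hftc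
    linear_combination hftc
  -- imaginary part of ∫ g (v')bar is zero
  have him : ∀ ε ∈ Ioo (0:ℝ) 1, (∫ x in ε..1, g x * (starRingEnd ℂ) (v' x)).im = 0 := by
    intro ε hε
    rw [intervalIntegral.integral_of_le hε.2.le]
    have hcg : EqOn (fun x => g x * (starRingEnd ℂ) (v' x))
        (fun x => ((x ^ α * Complex.normSq (v' x) : ℝ) : ℂ)) (Ioc ε 1) := by
      intro x hx
      have hx' : x ∈ Ioc (0:ℝ) 1 := ⟨lt_trans hε.1 hx.1, hx.2⟩
      simp only
      rw [hg x hx', mul_assoc, Complex.mul_conj, ← Complex.ofReal_mul]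
    rw [setIntegral_congr_fun measurableSet_Ioc hcg]
    have hOR : (∫ x in Ioc ε 1, ((x ^ α * Complex.normSq (v' x) : ℝ) : ℂ))
        = (((∫ x in Ioc ε 1, x ^ α * Complex.normSq (v' x)) : ℝ) : ℂ) := integral_ofReal
    rw [hOR]
    simp
  set A : ℂ := ∫ x in (0:ℝ)..1, f x with hA
  set K : ℂ := - (g 0 * (starRingEnd ℂ) (v 0)) - A with hKdef
  have hmemIoo : Ioo (0:ℝ) 1 ∈ 𝓝[>] (0:ℝ) := Ioo_mem_nhdsGT one_pos
  have hle : 𝓝[>] (0:ℝ) ≤ 𝓝[Icc (0:ℝ) 1] 0 :=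
    nhdsWithin_le_of_mem (Icc_mem_nhdsGT one_pos)
  have hT2 : Tendsto (fun ε => g ε * (starRingEnd ℂ) (v ε)) (𝓝[>] (0:ℝ))
      (𝓝 (g 0 * (starRingEnd ℂ) (v 0))) := by
    have hco : ContinuousOn (fun ε => g ε * (starRingEnd ℂ) (v ε)) (Icc (0:ℝ) 1) := by
      simp only [starRingEnd_apply]; exact hgc.mul hv.star
    exact Filter.Tendsto.mono_left (hco 0 ⟨le_refl 0, zero_le_one⟩) hle
  have hT1 : Tendsto (fun ε => ∫ x in ε..1, f x) (𝓝[>] (0:ℝ)) (𝓝 A) := by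
    have hprim : ContinuousOn (fun u => ∫ t in (0:ℝ)..u, f t) (Icc (0:ℝ) 1) := by
      have := intervalIntegral.continuousOn_primitive_interval
        (f := f) (a := (0:ℝ)) (b := 1) (μ := volume)
        (by rw [uIcc_of_le zero_le_one]; exact hfc.integrableOn_Icc)
      rwa [uIcc_of_le zero_le_one] at this
    have h0 : Tendsto (fun ε => ∫ t in (0:ℝ)..ε, f t) (𝓝[>] (0:ℝ)) (𝓝 0) := by
      have hcw := hprim 0 ⟨le_refl 0, zero_le_one⟩
      have : (∫ t in (0:ℝ)..(0:ℝ), f t) = 0 := intervalIntegral.integral_same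
      simpa [this] using Filter.Tendsto.mono_left hcw hle
    have heq : ∀ ε ∈ Ioo (0:ℝ) 1, (∫ x in ε..1, f x) = A - ∫ t in (0:ℝ)..ε, f t := by
      intro ε hε
      have hi1 : IntervalIntegrable f volume 0 ε := hfint.mono_set
        (by rw [uIcc_of_le hε.1.le, uIcc_of_le zero_le_one]
            exact Icc_subset_Icc le_rfl hε.2.le)
      have hi2 : IntervalIntegrable f volume ε 1 := hfint.mono_set
        (by rw [uIcc_of_le hε.2.le, uIcc_of_le zero_le_one]
            exact Icc_subset_Icc hε.1.le le_rfl)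
      have := intervalIntegral.integral_add_adjacent_intervals hi1 hi2
      rw [hA]
      linear_combination this
    have hlim : Tendsto (fun ε => A - ∫ t in (0:ℝ)..ε, f t) (𝓝[>] (0:ℝ)) (𝓝 A) := by
      simpa using (tendsto_const_nhds (x := A) (f := 𝓝[>] (0:ℝ))).sub h0
    apply hlim.congr'
    filter_upwards [hmemIoo] with ε hε
    exact (heq ε hε).symm
  have hKlim : Tendsto (fun ε => ∫ x in ε..1, g x * (starRingEnd ℂ) (v' x))
      (𝓝[>] (0:ℝ)) (𝓝 K) := by
    have hlim : Tendsto (fun ε => - (g ε * (starRingEnd ℂ) (v ε)) - ∫ x in ε..1, f x)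
        (𝓝[>] (0:ℝ)) (𝓝 K) := by
      rw [hKdef]
      exact hT2.neg.sub hT1
    apply hlim.congr'
    filter_upwards [hmemIoo] with ε hε
    exact (key ε hε).symm
  have hKim : K.im = 0 := by
    have h1 : Tendsto (fun ε => (∫ x in ε..1, g x * (starRingEnd ℂ) (v' x)).im)
        (𝓝[>] (0:ℝ)) (𝓝 K.im) := (Complex.continuous_im.tendsto K).comp hKlim
    have h2 : Tendsto (fun _ : ℝ => (0:ℝ)) (𝓝[>] (0:ℝ)) (𝓝 K.im) := by
      apply h1.congr'
      filter_upwards [hmemIoo] with ε hε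
      exact him ε hε
    exact (tendsto_nhds_unique h2 tendsto_const_nhds)
  set M : ℂ := ∫ ξ : ℝ, ((|ξ| ^ ((2 * αt - 1) / 2) : ℝ) : ℂ) * φ ξ with hMdef
  -- Part 1
  have hA_eq : A = - (g 0 * (starRingEnd ℂ) (v 0)) - K := by rw [hKdef]; ring
  have hpart1 : (∫ x in Ioc (0:ℝ) 1, (-Complex.I * g' x) * (starRingEnd ℂ) (v x)).re
      = -(ζ * (M * (starRingEnd ℂ) (v 0)).re) := by
    have h1 : (∫ x in Ioc (0:ℝ) 1, (-Complex.I * g' x) * (starRingEnd ℂ) (v x))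
        = -Complex.I * A := by
      have hpt : ∀ x : ℝ, (-Complex.I * g' x) * (starRingEnd ℂ) (v x) = -Complex.I * f x := by
        intro x; simp only [hfdef]; ring
      simp_rw [hpt]
      rw [MeasureTheory.integral_const_mul, hA, intervalIntegral.integral_of_le zero_le_one]
    have h2 : A.im = -(ζ * (M * (starRingEnd ℂ) (v 0)).re) := by
      have hAe : A = -(Complex.I * ((ζ:ℂ) * (M * (starRingEnd ℂ) (v 0)))) - K := by
        rw [hA_eq, hbc0]; ring
      rw [hAe]
      simp [hKim, Complex.mul_im, Complex.mul_re]
    rw [h1]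
    have h3 : (-Complex.I * A).re = A.im := by simp
    rw [h3, h2]
  -- Part 2
  have hconjInt : ∀ (h : ℝ → ℂ), Integrable h volume →
      Integrable (fun ξ => (starRingEnd ℂ) (h ξ)) volume := by
    intro h hh
    exact (Complex.conjLIE.integrable_comp_iff).2 hh
  have hsq : ∀ (h : ℝ → ℂ), MemLp h 2 volume → Integrable (fun ξ => ‖h ξ‖ ^ 2) volume := by
    intro h hh
    have h1 := hh.integrable_norm_rpow two_ne_zero ENNReal.ofNat_ne_top
    have h2 : ((2:ℝ≥0∞)).toReal = (2:ℝ) := by simp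
    rw [h2] at h1
    refine h1.congr (Eventually.of_forall fun ξ => ?_)
    show ‖h ξ‖ ^ (2:ℝ) = ‖h ξ‖ ^ (2:ℕ)
    rw [show (2:ℝ) = ((2:ℕ):ℝ) by norm_num, Real.rpow_natCast]
  have hf2int : Integrable (fun ξ : ℝ => (ξ^2 + η) * ‖φ ξ‖ ^ 2) volume := by
    have h1 := hsq _ hξφ2
    have h2 := (hsq _ hφ2).const_mul η
    refine (h1.add h2).congr (Eventually.of_forall fun ξ => ?_)
    simp only [Pi.add_apply, norm_mul, Complex.norm_real, Real.norm_eq_abs, mul_pow,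
      _root_.sq_abs]
    ring
  have hInt1 : Integrable (fun ξ : ℝ =>
      v 0 * (starRingEnd ℂ) (((|ξ| ^ ((2 * αt - 1) / 2) : ℝ) : ℂ) * φ ξ)) volume :=
    (hconjInt _ hμφ1).const_mul (v 0)
  have hInt2 : Integrable (fun ξ : ℝ => (((ξ^2 + η) * ‖φ ξ‖ ^ 2 : ℝ) : ℂ)) volume :=
    hf2int.ofReal
  have e1 : ∀ ξ : ℝ,
      (v 0 * ((|ξ| ^ ((2 * αt - 1) / 2) : ℝ) : ℂ) - ((ξ ^ 2 + η : ℝ) : ℂ) * φ ξ)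
          * (starRingEnd ℂ) (φ ξ)
      = v 0 * (starRingEnd ℂ) (((|ξ| ^ ((2 * αt - 1) / 2) : ℝ) : ℂ) * φ ξ)
          - (((ξ^2 + η) * ‖φ ξ‖ ^ 2 : ℝ) : ℂ) := by
    intro ξ
    have hcm : (starRingEnd ℂ) (((|ξ| ^ ((2 * αt - 1) / 2) : ℝ) : ℂ) * φ ξ)
        = ((|ξ| ^ ((2 * αt - 1) / 2) : ℝ) : ℂ) * (starRingEnd ℂ) (φ ξ) := by
      rw [map_mul, Complex.conj_ofReal]
    have habs : φ ξ * (starRingEnd ℂ) (φ ξ) = ((‖φ ξ‖ ^ 2 : ℝ) : ℂ) := by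
      rw [Complex.mul_conj, Complex.normSq_eq_norm_sq]
    rw [hcm, Complex.ofReal_mul, ← habs]
    ring
  have hsplit : (∫ ξ : ℝ, (v 0 * ((|ξ| ^ ((2 * αt - 1) / 2) : ℝ) : ℂ)
          - ((ξ ^ 2 + η : ℝ) : ℂ) * φ ξ) * (starRingEnd ℂ) (φ ξ))
      = v 0 * (starRingEnd ℂ) M
        - (((∫ ξ : ℝ, (ξ^2 + η) * ‖φ ξ‖ ^ 2) : ℝ) : ℂ) := by
    have hOR : (∫ ξ : ℝ, (((ξ^2 + η) * ‖φ ξ‖ ^ 2 : ℝ) : ℂ))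
        = (((∫ ξ : ℝ, (ξ^2 + η) * ‖φ ξ‖ ^ 2) : ℝ) : ℂ) := integral_ofReal
    simp_rw [e1]
    rw [integral_sub hInt1 hInt2, MeasureTheory.integral_const_mul, integral_conj,
      hOR, ← hMdef]
  have hre : (v 0 * (starRingEnd ℂ) M).re = (M * (starRingEnd ℂ) (v 0)).re := by
    simp [Complex.mul_re]
    ring
  rw [hpart1, hsplit]
  rw [Complex.sub_re, Complex.ofReal_re, hre]
  ring
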